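/- Let k : ℕ → ℕ be strictly increasing with k₁ = 1, k₂ = 2, suppose k_{i+1} < 2·k_i for all i ≥ 2, and suppose b_i(x) = ∑_{j=1}^{i-1} μ(k_j)·frac(x/k_j) − k_i·(∑_{j=1}^{i-1} μ(k_j)/k_j)·frac(x/k_i) with b_{i+1}(k_i) = −1 for all i ≥ 2. Then ∑_{j=1}^{i} μ(k_j)·⌊k_i/k_j⌋ = 1 for all i ≥ 1. -/

import Mathlib

open ArithmeticFunction in
open scoped ArithmeticFunction.Moebius in
theorem stmt_10 (k : ℕ → ℕ) (b : ℕ → ℝ → ℝ)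
    (hmono : StrictMono k) (hk1 : k 1 = 1) (hk2 : k 2 = 2)
    (hgap : ∀ i ≥ 2, k (i + 1) < 2 * k i)
    (hb : ∀ i ≥ 2, ∀ x : ℝ, 1 ≤ x →
      b i x = ∑ j ∈ Finset.Icc 1 (i - 1), (μ (k j) : ℝ) * Int.fract (x / (k j : ℝ)) -
        (k i : ℝ) * (∑ j ∈ Finset.Icc 1 (i - 1), (μ (k j) : ℝ) / (k j : ℝ)) *
          Int.fract (x / (k i : ℝ)))
    (hneg1 : ∀ i ≥ 2, b (i + 1) (k i) = -1) :
    ∀ i ≥ 1, ∑ j ∈ Finset.Icc 1 i, (μ (k j)) * ((k i / k j : ℕ) : ℤ) = 1 := by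
  have hkj : ∀ j, 1 ≤ j → 1 ≤ k j := fun j hj => hk1 ▸ hmono.monotone hj
  intro i hi
  rcases eq_or_lt_of_le hi with h1 | hi2
  · rw [← h1]
    simp [hk1]
  · have hi2 : 2 ≤ i := hi2
    have hki1 : (1:ℝ) ≤ k i := by exact_mod_cast hkj i hi
    have hksucc : (0:ℝ) < k (i+1) := by
      have := hkj (i+1) (by omega)
      exact_mod_cast Nat.lt_of_lt_of_le Nat.zero_lt_one this
    have hb' := hb (i+1) (by omega) (k i) hki1
    rw [hneg1 i hi2, Nat.add_sub_cancel] at hb'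
    have hfr : Int.fract ((k i : ℝ) / k (i+1)) = (k i : ℝ) / k (i+1) := by
      rw [Int.fract_eq_self]
      refine ⟨by positivity, ?_⟩
      rw [div_lt_one hksucc]
      exact_mod_cast hmono (Nat.lt_succ_self i)
    rw [hfr] at hb'
    have hfloor : ∀ j ∈ Finset.Icc 1 i,
        (μ (k j) : ℝ) * Int.fract ((k i : ℝ) / (k j : ℝ)) =
          (μ (k j) : ℝ) * ((k i : ℝ) / (k j : ℝ)) -
          (μ (k j) : ℝ) * ((k i / k j : ℕ) : ℝ) := by
      intro j hj
      have hcast : ((k i : ℝ)) / (k j : ℝ) = ((k i : ℤ) : ℝ) / ((k j : ℤ) : ℝ) := by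
        push_cast; ring
      have hfl : ⌊(k i : ℝ) / (k j : ℝ)⌋ = ((k i / k j : ℕ) : ℤ) := by
        rw [← Int.natCast_floor_eq_floor (by positivity), Nat.floor_div_eq_div]
      rw [Int.fract, hfl, Int.cast_natCast]
      ring
    rw [Finset.sum_congr rfl hfloor, Finset.sum_sub_distrib] at hb'
    have hmul : ∑ j ∈ Finset.Icc 1 i, (μ (k j) : ℝ) * ((k i : ℝ) / (k j : ℝ)) =
        (k i : ℝ) * ∑ j ∈ Finset.Icc 1 i, (μ (k j) : ℝ) / (k j : ℝ) := by
      rw [Finset.mul_sum]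
      exact Finset.sum_congr rfl fun j _ => by ring
    rw [hmul] at hb'
    have hcancel : (k (i+1) : ℝ) * (∑ j ∈ Finset.Icc 1 i, (μ (k j) : ℝ) / (k j : ℝ)) *
        ((k i : ℝ) / (k (i+1) : ℝ)) =
        (k i : ℝ) * ∑ j ∈ Finset.Icc 1 i, (μ (k j) : ℝ) / (k j : ℝ) := by
      field_simp
    rw [hcancel] at hb'
    have hB : (∑ j ∈ Finset.Icc 1 i, (μ (k j) : ℝ) * ((k i / k j : ℕ) : ℝ)) = 1 := by
      linarith
    have : ((∑ j ∈ Finset.Icc 1 i, (μ (k j)) * ((k i / k j : ℕ) : ℤ) : ℤ) : ℝ) = 1 := by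
      push_cast
      exact hB
    exact_mod_cast this
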